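/- For any lists p and y* over a type α with decidable equality, the minimum of D(p ++ s, y*) over all completions s is attained by some suffix of the ground truth: there exists k with 0 ≤ k ≤ |y*| such that D(p ++ y*_{≥k}, y*) = sInf { D(p ++ s, y*) : s ∈ List α }. -/

import Mathlib

/-- Cost structure for Levenshtein distance (as formerly in Mathlib). -/
structure Levenshtein.Cost (α β δ : Type*) where
  delete : α → δ
  insert : β → δ
  substitute : α → β → δ

/-- Unit costs (as formerly in Mathlib). -/
def Levenshtein.defaultCost {α : Type*} [DecidableEq α] : Levenshtein.Cost α α ℕ where
  delete _ := 1
  insert _ := 1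
  substitute a b := if a = b then 0 else 1

/-- One step of the dynamic program (as formerly in Mathlib). -/
def Levenshtein.impl {α β δ : Type*} [AddZeroClass δ] [Min δ] (C : Levenshtein.Cost α β δ)
    (xs : List α) (y : β) (d : {r : List δ // 0 < r.length}) : {r : List δ // 0 < r.length} :=
  let ⟨ds, w⟩ := d
  xs.zip (ds.zip ds.tail) |>.foldr
    (init := ⟨[C.insert y + ds.getLast (List.ne_nil_of_length_pos w)], by simp⟩)
    (fun ⟨x, d₀, d₁⟩ ⟨r, w⟩ =>
      ⟨min (C.delete x + r[0]) (min (C.insert y + d₀) (C.substitute x y + d₁)) :: r, by simp⟩)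

/-- Levenshtein distances of all suffixes of `xs` to `ys` (as formerly in Mathlib). -/
def suffixLevenshtein {α β δ : Type*} [AddZeroClass δ] [Min δ] (C : Levenshtein.Cost α β δ)
    (xs : List α) (ys : List β) : {r : List δ // 0 < r.length} :=
  ys.foldr
    (Levenshtein.impl C xs)
    (xs.foldr (init := ⟨[0], by simp⟩) (fun a ⟨r, w⟩ => ⟨(C.delete a + r[0]) :: r, by simp⟩))

/-- Levenshtein distance (as formerly in Mathlib). -/
def levenshtein {α β δ : Type*} [AddZeroClass δ] [Min δ] (C : Levenshtein.Cost α β δ)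
    (xs : List α) (ys : List β) : δ :=
  let ⟨r, _⟩ := suffixLevenshtein C xs ys
  r[0]

/-- Unit-cost Levenshtein edit distance between two lists. -/
def editDist {α : Type*} [DecidableEq α] (u v : List α) : ℕ :=
  levenshtein Levenshtein.defaultCost u v

/-- `rowMin p y = min over 0 ≤ j ≤ |y|` of the edit distance between `p` and `y.take j`. -/
def rowMin {α : Type*} [DecidableEq α] (p y : List α) : ℕ :=
  (Finset.range (y.length + 1)).inf' (by simp) (fun j => editDist p (y.take j))

namespace LevAux
variable {α β δ : Type*} [AddZeroClass δ] [Min δ] (C : Levenshtein.Cost α β δ)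

theorem impl_cons (x : α) (xs : List α) (y : β) (d : δ) (ds : List δ) (w) (w' : 0 < List.length ds) :
    Levenshtein.impl C (x :: xs) y ⟨d :: ds, w⟩ =
      let ⟨r, w⟩ := Levenshtein.impl C xs y ⟨ds, w'⟩
      ⟨min (C.delete x + r[0]) (min (C.insert y + d) (C.substitute x y + ds[0])) :: r, by simp⟩ :=
  match ds, w' with | _ :: _, _ => rfl

theorem impl_length (xs : List α) (y : β) (d : {r : List δ // 0 < r.length})
    (w : d.1.length = xs.length + 1) :
    (Levenshtein.impl C xs y d).1.length = xs.length + 1 := by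
  induction xs generalizing d with
  | nil => rfl
  | cons x xs ih =>
    match d, w with
    | ⟨d₁ :: d₂ :: ds, _⟩, w =>
      rw [impl_cons C x xs y d₁ (d₂ :: ds) _ (by simp)]
      simp only [List.length_cons]
      congr 1
      exact ih ⟨d₂ :: ds, (by simp)⟩ (by simpa using w)

theorem suffixLevenshtein_length (xs : List α) (ys : List β) :
    (suffixLevenshtein C xs ys).1.length = xs.length + 1 := by
  induction ys with
  | nil =>
    dsimp [suffixLevenshtein]
    induction xs with
    | nil => rfl
    | cons _ xs ih =>
      simp_all
  | cons y ys ih =>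
    dsimp [suffixLevenshtein]
    rw [impl_length]
    exact ih

theorem aux {α} {x y : {r : List α // 0 < r.length}}
    (w₀ : x.1[0]'x.2 = y.1[0]'y.2) (w : x.1.tail = y.1.tail) : x = y := by
  match x, y with
  | ⟨hx :: tx, _⟩, ⟨hy :: ty, _⟩ => simp_all

theorem suffixLevenshtein_cons₁ (x : α) (xs : List α) (ys : List β) :
    suffixLevenshtein C (x :: xs) ys =
      ⟨levenshtein C (x :: xs) ys :: (suffixLevenshtein C xs ys).1, by simp⟩ := by
  induction ys with
  | nil => rfl
  | cons y ys ih =>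
    apply aux
    · rfl
    · show (Levenshtein.impl C (x :: xs) y (suffixLevenshtein C (x :: xs) ys)).1.tail = _
      rw [ih]
      show _ = (Levenshtein.impl C xs y (suffixLevenshtein C xs ys)).1
      generalize suffixLevenshtein C xs ys = d
      obtain ⟨r, hr⟩ := d
      match r, hr with
      | a :: r', hr =>
        rw [impl_cons C x xs y _ _ _ (by simp)]
        generalize Levenshtein.impl C xs y ⟨a :: r', _⟩ = e
        obtain ⟨r2, _⟩ := e
        rfl

theorem lev_nil_nil : levenshtein C ([] : List α) ([] : List β) = 0 := rfl

theorem lev_cons_nil (x : α) (xs : List α) :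
    levenshtein C (x :: xs) ([] : List β) = C.delete x + levenshtein C xs [] := rfl

theorem lev_nil_cons (y : β) (ys : List β) :
    levenshtein C ([] : List α) (y :: ys) = C.insert y + levenshtein C [] ys := by
  have hl := suffixLevenshtein_length C ([] : List α) ys
  show (Levenshtein.impl C [] y (suffixLevenshtein C [] ys)).1[0]'(Levenshtein.impl C [] y (suffixLevenshtein C [] ys)).2 = _
  unfold levenshtein
  generalize suffixLevenshtein C ([] : List α) ys = d at hl ⊢
  obtain ⟨r, hr⟩ := d
  match r, hr, hl with
  | [a], _, _ => rfl
  | _ :: _ :: _, _, h => simp at h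

theorem lev_cons_cons (x : α) (xs : List α) (y : β) (ys : List β) :
    levenshtein C (x :: xs) (y :: ys) =
      min (C.delete x + levenshtein C xs (y :: ys))
        (min (C.insert y + levenshtein C (x :: xs) ys)
          (C.substitute x y + levenshtein C xs ys)) := by
  show (Levenshtein.impl C (x :: xs) y (suffixLevenshtein C (x :: xs) ys)).1[0]'(Levenshtein.impl C (x :: xs) y (suffixLevenshtein C (x :: xs) ys)).2 = _
  rw [suffixLevenshtein_cons₁]
  have hl := suffixLevenshtein_length C xs ys
  have e1 : levenshtein C xs (y :: ys) = (Levenshtein.impl C xs y (suffixLevenshtein C xs ys)).1[0]'(Levenshtein.impl C xs y (suffixLevenshtein C xs ys)).2 := rfl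
  have e2 : levenshtein C xs ys = (suffixLevenshtein C xs ys).1[0]'(suffixLevenshtein C xs ys).2 := rfl
  rw [e1, e2]
  generalize suffixLevenshtein C xs ys = d at hl ⊢
  obtain ⟨r, hr⟩ := d
  match r, hr, hl with
  | a :: r', hr, hl =>
    rw [impl_cons C x xs y (levenshtein C (x :: xs) ys) (a :: r') _ (by simp)]
    generalize Levenshtein.impl C xs y ⟨a :: r', hr⟩ = e
    obtain ⟨r2, _⟩ := e
    rfl

end LevAux

namespace EditDistAux

variable {α : Type*} [DecidableEq α]

lemma cons_nil (x : α) (u : List α) : editDist (x :: u) [] = 1 + editDist u [] := by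
  simp [editDist, LevAux.lev_cons_nil, Levenshtein.defaultCost]

lemma nil_cons (y : α) (v : List α) : editDist [] (y :: v) = 1 + editDist [] v := by
  simp [editDist, LevAux.lev_nil_cons, Levenshtein.defaultCost]

lemma cons_cons (x y : α) (u v : List α) :
    editDist (x :: u) (y :: v) =
      min (1 + editDist u (y :: v))
        (min (1 + editDist (x :: u) v)
          ((if x = y then 0 else 1) + editDist u v)) := by
  simp [editDist, LevAux.lev_cons_cons, Levenshtein.defaultCost]

lemma delete_le (x : α) (u v : List α) : editDist (x :: u) v ≤ 1 + editDist u v := by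
  cases v with
  | nil => simp [cons_nil]
  | cons y v => rw [cons_cons]; exact min_le_left _ _

lemma insert_le (y : α) (u v : List α) : editDist u (y :: v) ≤ 1 + editDist u v := by
  cases u with
  | nil => simp [nil_cons]
  | cons x u => rw [cons_cons]; exact le_trans (min_le_right _ _) (min_le_left _ _)

lemma subst_le (x y : α) (u v : List α) :
    editDist (x :: u) (y :: v) ≤ (if x = y then 0 else 1) + editDist u v := by
  rw [cons_cons]; exact le_trans (min_le_right _ _) (min_le_right _ _)

lemma self_eq_zero (w : List α) : editDist w w = 0 := by
  induction w with
  | nil => simp [editDist, LevAux.lev_nil_nil]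
  | cons x w ih =>
      refine Nat.le_antisymm ?_ (Nat.zero_le _)
      calc editDist (x :: w) (x :: w) ≤ (if x = x then 0 else 1) + editDist w w :=
            subst_le x x w w
        _ = 0 := by simp [ih]

lemma append_append_le (w : List α) : ∀ p q : List α,
    editDist (p ++ w) (q ++ w) ≤ editDist p q
  | [], [] => by simp [self_eq_zero]
  | [], y :: q => by
      calc editDist ([] ++ w) ((y :: q) ++ w) ≤ 1 + editDist ([] ++ w) (q ++ w) :=
            insert_le _ _ _
        _ ≤ 1 + editDist [] q := by
            exact Nat.add_le_add_left (append_append_le w [] q) 1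
        _ = editDist [] (y :: q) := (nil_cons y q).symm
  | x :: p, [] => by
      calc editDist ((x :: p) ++ w) ([] ++ w) ≤ 1 + editDist (p ++ w) ([] ++ w) :=
            delete_le _ _ _
        _ ≤ 1 + editDist p [] := Nat.add_le_add_left (append_append_le w p []) 1
        _ = editDist (x :: p) [] := (cons_nil x p).symm
  | x :: p, y :: q => by
      rw [cons_cons x y p q]
      rcases min_choice (1 + editDist p (y :: q))
          (min (1 + editDist (x :: p) q) ((if x = y then 0 else 1) + editDist p q)) with h | h
      · rw [h]
        calc editDist ((x :: p) ++ w) ((y :: q) ++ w)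
              ≤ 1 + editDist (p ++ w) ((y :: q) ++ w) := delete_le _ _ _
          _ ≤ 1 + editDist p (y :: q) := Nat.add_le_add_left (append_append_le w p (y :: q)) 1
      · rw [h]
        rcases min_choice (1 + editDist (x :: p) q)
            ((if x = y then 0 else 1) + editDist p q) with h2 | h2
        · rw [h2]
          calc editDist ((x :: p) ++ w) ((y :: q) ++ w)
                ≤ 1 + editDist ((x :: p) ++ w) (q ++ w) := insert_le _ _ _
            _ ≤ 1 + editDist (x :: p) q :=
                Nat.add_le_add_left (append_append_le w (x :: p) q) 1
        · rw [h2]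
          calc editDist ((x :: p) ++ w) ((y :: q) ++ w)
                ≤ (if x = y then 0 else 1) + editDist (p ++ w) (q ++ w) := subst_le _ _ _ _
            _ ≤ (if x = y then 0 else 1) + editDist p q :=
                Nat.add_le_add_left (append_append_le w p q) _

lemma nil_eq_length (u : List α) : editDist u [] = u.length := by
  induction u with
  | nil => simp [editDist, LevAux.lev_nil_nil]
  | cons x u ih => rw [cons_nil, ih, List.length_cons]; omega

lemma exists_take_le (s : List α) : ∀ p y : List α,
    ∃ j ≤ y.length, editDist p (y.take j) ≤ editDist (p ++ s) y
  | [], y => ⟨0, Nat.zero_le _, by simp [editDist, LevAux.lev_nil_nil]⟩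
  | x :: p, [] => by
      refine ⟨0, le_refl _, ?_⟩
      simp only [List.take_nil]
      rw [nil_eq_length, nil_eq_length]
      simp
  | x :: p, z :: y => by
      rw [show (x :: p) ++ s = x :: (p ++ s) from rfl, cons_cons x z (p ++ s) y]
      rcases min_choice (1 + editDist (p ++ s) (z :: y))
          (min (1 + editDist (x :: (p ++ s)) y)
            ((if x = z then 0 else 1) + editDist (p ++ s) y)) with h | h
      · rw [h]
        obtain ⟨j, hj, hle⟩ := exists_take_le s p (z :: y)
        exact ⟨j, hj, le_trans (delete_le x p _) (Nat.add_le_add_left hle 1)⟩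
      · rw [h]
        rcases min_choice (1 + editDist (x :: (p ++ s)) y)
            ((if x = z then 0 else 1) + editDist (p ++ s) y) with h2 | h2
        · rw [h2]
          obtain ⟨j, hj, hle⟩ := exists_take_le s (x :: p) y
          refine ⟨j + 1, by simpa using hj, ?_⟩
          rw [List.take_succ_cons]
          exact le_trans (insert_le z (x :: p) _) (Nat.add_le_add_left hle 1)
        · rw [h2]
          obtain ⟨j, hj, hle⟩ := exists_take_le s p y
          refine ⟨j + 1, by simpa using hj, ?_⟩
          rw [List.take_succ_cons]
          exact le_trans (subst_le x z p _) (Nat.add_le_add_left hle _)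
  termination_by p y => p.length + y.length

end EditDistAux

theorem exists_optimal_suffix_completion {α : Type*} [DecidableEq α]
    (p ystar : List α) :
    ∃ k ≤ ystar.length,
      editDist (p ++ ystar.drop k) ystar
        = sInf {d | ∃ s : List α, d = editDist (p ++ s) ystar} := by
  set S : Set ℕ := {d | ∃ s : List α, d = editDist (p ++ s) ystar} with hS
  -- the minimum over prefixes
  obtain ⟨k, hk, hkmin⟩ :
      ∃ k ≤ ystar.length, ∀ j ≤ ystar.length,
        editDist p (ystar.take k) ≤ editDist p (ystar.take j) := by
    obtain ⟨k, hk, hmin⟩ := Finset.exists_min_image (Finset.range (ystar.length + 1))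
      (fun j => editDist p (ystar.take j)) ⟨0, by simp⟩
    exact ⟨k, by simpa using Nat.lt_succ_iff.mp (Finset.mem_range.mp hk),
      fun j hj => hmin j (Finset.mem_range.mpr (Nat.lt_succ_of_le hj))⟩
  -- upper bound: taking suffix drop k achieves editDist p (take k)
  have hub : editDist (p ++ ystar.drop k) ystar ≤ editDist p (ystar.take k) := by
    have h := EditDistAux.append_append_le (ystar.drop k) p (ystar.take k)
    rwa [List.take_append_drop] at h
  -- lower bound: every completion is ≥ the min over prefixes
  have hlb : ∀ d ∈ S, editDist p (ystar.take k) ≤ d := by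
    rintro d ⟨s, rfl⟩
    obtain ⟨j, hj, hle⟩ := EditDistAux.exists_take_le s p ystar
    exact le_trans (hkmin j hj) hle
  have hmem : editDist (p ++ ystar.drop k) ystar ∈ S := ⟨ystar.drop k, rfl⟩
  refine ⟨k, hk, le_antisymm ?_ (Nat.sInf_le hmem)⟩
  exact le_trans hub (le_csInf ⟨_, hmem⟩ hlb)
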